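/- arXiv:1108.4886 — 2 statements merged into one kernel-verified Lean document; each statement's English description precedes it below -/
import Mathlib

section
/- Let σ ≠ 0, μ_C ≥ 0, μ_F > 0, α ∈ (0,1), set μ̃ := μ_C + σ²/2, and define β_± := −μ̃/σ² ± √((μ̃/σ²)² + 2μ_F/σ²). Then 2μ_F − σ²β₋ − ασ²(1+β₊) > 0. -/
/-- For `σ ≠ 0`, `μ_C ≥ 0`, `μ_F > 0`, `α ∈ (0,1)`, `μ̃ = μ_C + σ²/2` and
`β_± = −μ̃/σ² ± √((μ̃/σ²)² + 2μ_F/σ²)`, one has `2μ_F − σ²β₋ − ασ²(1+β₊) > 0`. -/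
theorem stmt_9 (σ μC μF α : ℝ) (hσ : σ ≠ 0) (hμC : 0 ≤ μC) (hμF : 0 < μF)
    (hα : α ∈ Set.Ioo (0:ℝ) 1)
    (μt βp βm : ℝ) (hμt : μt = μC + σ ^ 2 / 2)
    (hβp : βp = -μt / σ ^ 2 + Real.sqrt ((μt / σ ^ 2) ^ 2 + 2 * μF / σ ^ 2))
    (hβm : βm = -μt / σ ^ 2 - Real.sqrt ((μt / σ ^ 2) ^ 2 + 2 * μF / σ ^ 2)) :
    0 < 2 * μF - σ ^ 2 * βm - α * σ ^ 2 * (1 + βp) := by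
  obtain ⟨hα0, hα1⟩ := hα
  have hs : 0 < σ ^ 2 := by positivity
  set R := Real.sqrt ((μt / σ ^ 2) ^ 2 + 2 * μF / σ ^ 2) with hR
  have harg : 0 ≤ (μt / σ ^ 2) ^ 2 + 2 * μF / σ ^ 2 := by positivity
  have hR2 : R ^ 2 = (μt / σ ^ 2) ^ 2 + 2 * μF / σ ^ 2 := Real.sq_sqrt harg
  have hRnn : 0 ≤ R := Real.sqrt_nonneg _
  have hm : (0:ℝ) < μt / σ ^ 2 := by
    apply div_pos _ hs; rw [hμt]; positivity
  have hRm : μt / σ ^ 2 < R := by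
    nlinarith [div_pos (by linarith : (0:ℝ) < 2 * μF) hs]
  have hmhalf : (1:ℝ)/2 ≤ μt / σ ^ 2 := by
    rw [hμt, le_div_iff₀ hs]; nlinarith
  have key : μt = (μt / σ ^ 2) * σ ^ 2 := by field_simp
  subst hβp hβm
  have : 2 * μF - σ ^ 2 * (-μt / σ ^ 2 - R) - α * σ ^ 2 * (1 + (-μt / σ ^ 2 + R))
      = 2 * μF + (1 + α) * ((μt / σ ^ 2) * σ ^ 2) + (1 - α) * (R * σ ^ 2) - α * σ ^ 2 := by
    field_simp; ring
  rw [this]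
  nlinarith [mul_lt_mul_of_pos_right hRm hs, mul_le_mul_of_nonneg_right hmhalf hs.le]
end

section
/- Let σ ≠ 0, μ_C ≥ 0, μ_F > 0, α ∈ (0,1), set μ̃ := μ_C + σ²/2, define β_± := −μ̃/σ² ± √((μ̃/σ²)² + 2μ_F/σ²), and let a := (2/(2μ_F − σ²β₋ − ασ²(1+β₊)))^{1/(1−α)}. Then a > 0, a^{α−1} = μ_F·(1+β₊)(α+β₋)/(β₊·β₋), and (1/μ_F)·a^{α−1}·(β₊·β₋)/((1+β₊)(α+β₋)) = 1 (all powers being real powers). -/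
/-- For `σ ≠ 0`, `μ_C ≥ 0`, `μ_F > 0`, `α ∈ (0,1)`, `μ̃ = μ_C + σ²/2`,
`β_± = −μ̃/σ² ± √((μ̃/σ²)² + 2μ_F/σ²)` and
`a = (2/(2μ_F − σ²β₋ − ασ²(1+β₊)))^(1/(1−α))`, one has `a > 0`,
`a^(α−1) = μ_F(1+β₊)(α+β₋)/(β₊β₋)` and
`(1/μ_F)·a^(α−1)·(β₊β₋)/((1+β₊)(α+β₋)) = 1` (real powers). -/
theorem stmt_10 (σ μC μF α : ℝ) (hσ : σ ≠ 0) (hμC : 0 ≤ μC) (hμF : 0 < μF)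
    (hα : α ∈ Set.Ioo (0:ℝ) 1)
    (μt βp βm a : ℝ) (hμt : μt = μC + σ ^ 2 / 2)
    (hβp : βp = -μt / σ ^ 2 + Real.sqrt ((μt / σ ^ 2) ^ 2 + 2 * μF / σ ^ 2))
    (hβm : βm = -μt / σ ^ 2 - Real.sqrt ((μt / σ ^ 2) ^ 2 + 2 * μF / σ ^ 2))
    (ha : a = (2 / (2 * μF - σ ^ 2 * βm - α * σ ^ 2 * (1 + βp))) ^ (1 / (1 - α))) :
    0 < a ∧
    a ^ (α - 1) = μF * ((1 + βp) * (α + βm)) / (βp * βm) ∧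
    (1 / μF) * a ^ (α - 1) * (βp * βm) / ((1 + βp) * (α + βm)) = 1 := by
  obtain ⟨hα0, hα1⟩ := hα
  have hσ2 : (0:ℝ) < σ ^ 2 := by positivity
  set s := Real.sqrt ((μt / σ ^ 2) ^ 2 + 2 * μF / σ ^ 2) with hs
  have hsnn : 0 ≤ s := Real.sqrt_nonneg _
  have hs2 : s ^ 2 = (μt / σ ^ 2) ^ 2 + 2 * μF / σ ^ 2 := by
    rw [hs, Real.sq_sqrt]; positivity
  have hμt0 : 0 < μt := by rw [hμt]; nlinarith
  have ht0 : 0 < μt / σ ^ 2 := div_pos hμt0 hσ2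
  have hc0 : 0 < 2 * μF / σ ^ 2 := by positivity
  have hst : μt / σ ^ 2 < s := by
    have h : (μt / σ ^ 2) ^ 2 < s ^ 2 := by rw [hs2]; linarith
    exact lt_of_pow_lt_pow_left₀ 2 hsnn h
  have hβp0 : 0 < βp := by rw [hβp, neg_div]; linarith
  have ht12 : (1:ℝ) / 2 ≤ μt / σ ^ 2 := by
    rw [hμt, div_le_div_iff₀ (by norm_num) hσ2]; nlinarith
  have hβm1 : βm < -1 := by
    have h1 : (1 - μt / σ ^ 2) ^ 2 < s ^ 2 := by rw [hs2]; nlinarith [ht12, hc0]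
    have h2 : 1 - μt / σ ^ 2 < s := lt_of_pow_lt_pow_left₀ 2 hsnn h1
    rw [hβm, neg_div]; linarith
  have hprod : βp * βm = (μt / σ ^ 2) ^ 2 - s ^ 2 := by rw [hβp, hβm]; ring
  have hP : βp * βm = -(2 * μF) / σ ^ 2 := by rw [hprod, hs2]; ring
  have h2 : σ ^ 2 * (βp * βm) = -(2 * μF) := by
    rw [hP]; field_simp
  have hDen : 2 * μF - σ ^ 2 * βm - α * σ ^ 2 * (1 + βp)
      = -(σ ^ 2 * ((1 + βp) * (α + βm))) := by linear_combination h2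
  have hβp1 : 0 < 1 + βp := by linarith
  have hαβm : α + βm < 0 := by linarith
  have hβpne : βp ≠ 0 := ne_of_gt hβp0
  have hβmne : βm ≠ 0 := by linarith
  have hD : 0 < 2 * μF - σ ^ 2 * βm - α * σ ^ 2 * (1 + βp) := by
    rw [hDen]
    have h5 : 0 < σ ^ 2 * ((1 + βp) * (-(α + βm))) :=
      mul_pos hσ2 (mul_pos hβp1 (by linarith))
    nlinarith [h5]
  have hbase : 0 < 2 / (2 * μF - σ ^ 2 * βm - α * σ ^ 2 * (1 + βp)) := by positivity
  have ha0 : 0 < a := by rw [ha]; exact Real.rpow_pos_of_pos hbase _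
  have hαne : (1:ℝ) - α ≠ 0 := by linarith
  have hapow : a ^ (α - 1)
      = μF * ((1 + βp) * (α + βm)) / (βp * βm) := by
    rw [ha, ← Real.rpow_mul (le_of_lt hbase)]
    have he : 1 / (1 - α) * (α - 1) = -1 := by field_simp; ring
    rw [he, Real.rpow_neg_one, inv_div, hDen, hP]
    field_simp
  refine ⟨ha0, hapow, ?_⟩
  rw [hapow]
  have hne1 : (1 + βp) ≠ 0 := ne_of_gt hβp1
  have hne2 : (α + βm) ≠ 0 := ne_of_lt hαβm
  field_simp
end
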